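/- Let n ≥ 1 be an integer and let ω = exp(2πi/n) ∈ ℂ. For every integer u with 0 ≤ u ≤ n−1 one has Σ_{j=1}^{n−1} ω^{ju}/(1 − ω^{−j})² = −(n−1)(n−5)/12 + u(n−u−2)/2 (an equality of complex numbers, where the right-hand side is a rational number viewed in ℂ). -/

import Mathlib

set_option linter.unusedSectionVars false
set_option linter.constructorNameAsVariable false
set_option maxHeartbeats 800000
open Finset

lemma beta_poly_sum (c : ℂ) (m : ℕ) :
    ∑ u ∈ range m, (u:ℂ) * (c - u - 2) =
      (c-2) * m * (m-1) / 2 - (m-1) * m * (2*m-1) / 6 := by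
  induction m with
  | zero => simp
  | succ k ih => rw [Finset.sum_range_succ, ih]; push_cast; ring

lemma beta_field_id (a x : ℂ) (hx0 : x ≠ 0) (hx' : 1 - x ≠ 0) (hxi : 1 - x⁻¹ ≠ 0) :
    a * x / (1-x⁻¹)^2 = a / (1-x⁻¹)^2 - a * x^2 / (1-x) := by
  have key : (1 - x⁻¹)^2 = (1-x)^2 / x^2 := by
    field_simp
    ring
  rw [key, div_div_eq_mul_div, div_div_eq_mul_div]
  rw [div_sub_div _ _ (pow_ne_zero 2 hx') hx']
  rw [div_eq_div_iff (pow_ne_zero 2 hx') (mul_ne_zero (pow_ne_zero 2 hx') hx')]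
  ring

section BetaAux
variable (n : ℕ) (ω : ℂ) (hn : 1 ≤ n) (hω0 : ω ≠ 0) (hwn : ω ^ n = 1)
  (hne : ∀ j, 1 ≤ j → j ≤ n - 1 → ω ^ j ≠ 1)

include hn hω0 hwn hne

lemma beta_card : ((Finset.Icc 1 (n-1)).card : ℂ) = (n:ℂ) - 1 := by
  rw [Nat.card_Icc]
  have hc : (n-1+1-1 : ℕ) = n-1 := by omega
  rw [hc, Nat.cast_sub hn, Nat.cast_one]

lemma beta_geom_zero (j : ℕ) (h1 : 1 ≤ j) (h2 : j ≤ n - 1) :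
    ∑ u ∈ range n, (ω ^ j) ^ u = 0 := by
  have hx : ω ^ j ≠ 1 := hne j h1 h2
  rw [geom_sum_eq hx, ← pow_mul, mul_comm, pow_mul, hwn, one_pow]
  simp

lemma beta_icc_sum (v : ℕ) (h1 : 1 ≤ v) (h2 : v ≤ n - 1) :
    ∑ j ∈ Finset.Icc 1 (n - 1), ω ^ (j * v) = -1 := by
  have hIcc : Finset.Icc 1 (n-1) = Finset.Ico 1 n := by ext x; simp; omega
  have h0 : ∑ j ∈ range n, (ω ^ v) ^ j = 0 := beta_geom_zero n ω hn hω0 hwn hne v h1 h2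
  have hsplit : ∑ j ∈ range n, (ω ^ v) ^ j
      = (ω ^ v) ^ 0 + ∑ j ∈ Finset.Ico 1 n, (ω ^ v) ^ j := by
    rw [Finset.range_eq_Ico, ← Finset.sum_Ico_consecutive _ (by omega : 0 ≤ 1) (by omega : 1 ≤ n)]
    simp [Finset.sum_Ico_eq_sum_range]
  rw [h0] at hsplit
  have h2' : ∑ j ∈ Finset.Ico 1 n, (ω ^ v) ^ j = -1 := by
    rw [pow_zero] at hsplit; linear_combination -hsplit
  rw [hIcc, ← h2']
  exact Finset.sum_congr rfl fun j _ => by rw [← pow_mul, mul_comm]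

lemma beta_T0 : ∑ j ∈ Finset.Icc 1 (n-1), 1/(1-ω^j) = ((n:ℂ)-1)/2 := by
  have hIcc : Finset.Icc 1 (n-1) = Finset.Ico 1 n := by ext x; simp; omega
  have pair : ∀ j ∈ Finset.Icc 1 (n-1), 1/(1-ω^j) + 1/(1-ω^(n-j)) = 1 := by
    intro j hj
    simp only [Finset.mem_Icc] at hj
    have hx : ω ^ j ≠ 1 := hne j hj.1 hj.2
    have hy : ω ^ (n-j) ≠ 1 := hne (n-j) (by omega) (by omega)
    have hxy : ω ^ (n-j) * ω ^ j = 1 := by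
      rw [← pow_add, Nat.sub_add_cancel (by omega), hwn]
    have hx' : 1 - ω ^ j ≠ 0 := sub_ne_zero.2 (Ne.symm hx)
    have hy' : 1 - ω ^ (n-j) ≠ 0 := sub_ne_zero.2 (Ne.symm hy)
    field_simp
    linear_combination -hxy
  have refl : ∑ j ∈ Finset.Icc 1 (n-1), (1:ℂ)/(1-ω^(n-j))
      = ∑ j ∈ Finset.Icc 1 (n-1), 1/(1-ω^j) := by
    rw [hIcc, Finset.sum_Ico_eq_sum_range, Finset.sum_Ico_eq_sum_range]
    rw [← Finset.sum_range_reflect]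
    apply Finset.sum_congr rfl
    intro i hi
    simp only [Finset.mem_range] at hi
    have : n - (1 + (n - 1 - 1 - i)) = 1 + i := by omega
    rw [this]
  have two : (2:ℂ) * (∑ j ∈ Finset.Icc 1 (n-1), 1/(1-ω^j)) = (n:ℂ) - 1 := by
    have h := Finset.sum_congr rfl pair
    rw [Finset.sum_add_distrib, refl, Finset.sum_const, nsmul_eq_mul, mul_one,
      beta_card n ω hn hω0 hwn hne] at h
    linear_combination h
  linear_combination two / 2

lemma beta_T_val : ∀ v : ℕ, 1 ≤ v → v ≤ n →
    ∑ j ∈ Finset.Icc 1 (n-1), ω^(j*v)/(1-ω^j) = ((n:ℂ)-1)/2 - n + v := by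
  intro v hv1
  induction v, hv1 using Nat.le_induction with
  | base =>
    intro _
    have hpt : ∀ j ∈ Finset.Icc 1 (n-1), ω^(j*1)/(1-ω^j) = 1/(1-ω^j) - 1 := by
      intro j hj
      simp only [Finset.mem_Icc] at hj
      have hx' : 1 - ω ^ j ≠ 0 := sub_ne_zero.2 (Ne.symm (hne j hj.1 hj.2))
      rw [mul_one]
      field_simp
      ring
    rw [Finset.sum_congr rfl hpt, Finset.sum_sub_distrib, beta_T0 n ω hn hω0 hwn hne,
      Finset.sum_const, nsmul_eq_mul, mul_one, beta_card n ω hn hω0 hwn hne]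
    push_cast
    ring
  | succ v hv1 ih =>
    intro hvn
    have hv : v ≤ n - 1 := by omega
    have hpt : ∀ j ∈ Finset.Icc 1 (n-1),
        ω^(j*(v+1))/(1-ω^j) = ω^(j*v)/(1-ω^j) - ω^(j*v) := by
      intro j hj
      simp only [Finset.mem_Icc] at hj
      have hx' : 1 - ω ^ j ≠ 0 := sub_ne_zero.2 (Ne.symm (hne j hj.1 hj.2))
      have e1 : ω^(j*(v+1)) = ω^(j*v) * ω^j := by rw [mul_add, pow_add, mul_one]
      rw [e1]
      field_simp
      ring
    rw [Finset.sum_congr rfl hpt, Finset.sum_sub_distrib, ih (by omega),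
      beta_icc_sum n ω hn hω0 hwn hne v hv1 hv]
    push_cast
    ring

lemma beta_S_step (u : ℕ) (h2 : u + 2 ≤ n) :
    ∑ j ∈ Finset.Icc 1 (n-1), ω^(j*(u+1))/(1-(ω^j)⁻¹)^2
      = (∑ j ∈ Finset.Icc 1 (n-1), ω^(j*u)/(1-(ω^j)⁻¹)^2) + ((n:ℂ)-3)/2 - u := by
  have hpt : ∀ j ∈ Finset.Icc 1 (n-1),
      ω^(j*(u+1))/(1-(ω^j)⁻¹)^2
        = ω^(j*u)/(1-(ω^j)⁻¹)^2 - ω^(j*(u+2))/(1-ω^j) := by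
    intro j hj
    simp only [Finset.mem_Icc] at hj
    have hx1 : ω ^ j ≠ 1 := hne j hj.1 hj.2
    have hx0 : ω ^ j ≠ 0 := pow_ne_zero _ hω0
    have hx' : 1 - ω ^ j ≠ 0 := sub_ne_zero.2 (Ne.symm hx1)
    have hxi : 1 - (ω ^ j)⁻¹ ≠ 0 := by
      rw [sub_ne_zero]
      intro hcon
      exact hx1 (by rw [← inv_inv (ω^j), ← hcon, inv_one])
    have e1 : ω^(j*(u+1)) = ω^(j*u) * ω^j := by rw [mul_add, pow_add, mul_one]
    have e2 : ω^(j*(u+2)) = ω^(j*u) * (ω^j)^2 := by rw [mul_add, pow_add]; ring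
    rw [e1, e2]
    exact beta_field_id _ _ hx0 hx' hxi
  rw [Finset.sum_congr rfl hpt, Finset.sum_sub_distrib,
    beta_T_val n ω hn hω0 hwn hne (u+2) (by omega) h2]
  push_cast
  ring

lemma beta_S_val (u : ℕ) (hu : u ≤ n - 1) :
    ∑ j ∈ Finset.Icc 1 (n-1), ω^(j*u)/(1-(ω^j)⁻¹)^2
      = (∑ j ∈ Finset.Icc 1 (n-1), ω^(j*0)/(1-(ω^j)⁻¹)^2)
        + (u:ℂ) * ((n:ℂ) - u - 2)/2 := by
  induction u with
  | zero => simp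
  | succ k ih =>
    have hk2 : k + 2 ≤ n := by omega
    rw [beta_S_step n ω hn hω0 hwn hne k hk2, ih (by omega)]
    push_cast
    ring

lemma beta_S_total :
    ∑ u ∈ range n, ∑ j ∈ Finset.Icc 1 (n-1), ω^(j*u)/(1-(ω^j)⁻¹)^2 = 0 := by
  rw [Finset.sum_comm]
  apply Finset.sum_eq_zero
  intro j hj
  simp only [Finset.mem_Icc] at hj
  have : ∀ u ∈ range n, ω^(j*u)/(1-(ω^j)⁻¹)^2 = (ω^j)^u/(1-(ω^j)⁻¹)^2 := by
    intro u _
    rw [pow_mul]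
  rw [Finset.sum_congr rfl this, ← Finset.sum_div,
    beta_geom_zero n ω hn hω0 hwn hne j hj.1 hj.2, zero_div]

lemma beta_S0 :
    ∑ j ∈ Finset.Icc 1 (n-1), ω^(j*0)/(1-(ω^j)⁻¹)^2
      = -(((n:ℂ)-1) * ((n:ℂ)-5))/12 := by
  have hn0 : (n:ℂ) ≠ 0 := Nat.cast_ne_zero.2 (by omega)
  have h1 := beta_S_total n ω hn hω0 hwn hne
  have h2 : ∀ u ∈ range n,
      ∑ j ∈ Finset.Icc 1 (n-1), ω^(j*u)/(1-(ω^j)⁻¹)^2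
        = (∑ j ∈ Finset.Icc 1 (n-1), ω^(j*0)/(1-(ω^j)⁻¹)^2)
          + (u:ℂ) * ((n:ℂ) - u - 2)/2 := by
    intro u hu
    simp only [Finset.mem_range] at hu
    exact beta_S_val n ω hn hω0 hwn hne u (by omega)
  rw [Finset.sum_congr rfl h2, Finset.sum_add_distrib, Finset.sum_const,
    Finset.card_range, nsmul_eq_mul] at h1
  have h3 : ∑ u ∈ range n, (u:ℂ) * ((n:ℂ) - u - 2)/2
      = (∑ u ∈ range n, (u:ℂ) * ((n:ℂ) - u - 2))/2 := by
    rw [Finset.sum_div]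
  rw [h3, beta_poly_sum ((n:ℂ)) n] at h1
  apply mul_left_cancel₀ hn0
  linear_combination h1

end BetaAux


/-- For `n ≥ 1`, `ω = exp(2πi/n)` and `0 ≤ u ≤ n-1`:
`∑_{j=1}^{n-1} ω^{ju}/(1 - ω^{-j})² = -(n-1)(n-5)/12 + u(n-u-2)/2`. -/
theorem beta_sum_eval (n : ℕ) (hn : 1 ≤ n) (ω : ℂ)
    (hω : ω = Complex.exp (2 * Real.pi * Complex.I / n))
    (u : ℕ) (hu : u ≤ n - 1) :
    ∑ j ∈ Finset.Icc 1 (n - 1), ω ^ (j * u) / (1 - ω ^ (-(j : ℤ))) ^ 2 =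
      -(((n : ℂ) - 1) * ((n : ℂ) - 5)) / 12 + (u : ℂ) * ((n : ℂ) - (u : ℂ) - 2) / 2 := by
  have hprim : IsPrimitiveRoot ω n := by
    rw [hω]; exact Complex.isPrimitiveRoot_exp n (by omega)
  have hwn : ω ^ n = 1 := hprim.pow_eq_one
  have hω0 : ω ≠ 0 := by
    rw [hω]; exact Complex.exp_ne_zero _
  have hne : ∀ j, 1 ≤ j → j ≤ n - 1 → ω ^ j ≠ 1 := fun j h1 h2 =>
    hprim.pow_ne_one_of_pos_of_lt (by omega) (by omega)
  have hz : ∀ j : ℕ, ω ^ (-(j:ℤ)) = (ω ^ j)⁻¹ := by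
    intro j
    rw [zpow_neg, zpow_natCast]
  simp only [hz]
  rw [beta_S_val n ω hn hω0 hwn hne u hu, beta_S0 n ω hn hω0 hwn hne]
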